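/- For any 0 < δ < 1/2, with α := √(1-δ²), the KL divergence between the Gaussian distributions N(αμ, δ²·I_d) and N(μ/α, (δ/α)²·I_d) on ℝ^d satisfies D_KL(N(αμ, δ²I_d) || N(μ/α, (δ/α)²I_d)) ≤ (‖μ‖²/2 + d/6)·δ². -/

import Mathlib

/-- For `0 < δ < 1/2` and `α := √(1-δ²)`, the (closed-form) KL divergence between
`N(αμ, δ²I_d)` and `N(μ/α, (δ/α)²I_d)`, namely
`(d/2)(σ₁²/σ₂² - 1) + ‖m₁ - m₂‖²/(2σ₂²) + d·log(σ₂/σ₁)`, is at most `(‖μ‖²/2 + d/6)·δ²`. -/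
theorem stmt1 (d : ℕ) (μ : EuclideanSpace ℝ (Fin d)) (δ : ℝ) (hδ0 : 0 < δ) (hδ : δ < 1/2) :
    (d / 2 : ℝ) * (δ ^ 2 / (δ / Real.sqrt (1 - δ ^ 2)) ^ 2 - 1)
      + ‖(Real.sqrt (1 - δ ^ 2)) • μ - (1 / Real.sqrt (1 - δ ^ 2)) • μ‖ ^ 2
          / (2 * (δ / Real.sqrt (1 - δ ^ 2)) ^ 2)
      + d * Real.log ((δ / Real.sqrt (1 - δ ^ 2)) / δ)
    ≤ (‖μ‖ ^ 2 / 2 + d / 6) * δ ^ 2 := by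
  set x := δ ^ 2 with hx
  have hx0 : 0 < x := by positivity
  have hxlt : x < 1/4 := by
    rw [hx]; nlinarith
  have h1x : 0 < 1 - x := by linarith
  set α := Real.sqrt (1 - x) with hα
  have hα0 : 0 < α := Real.sqrt_pos.mpr h1x
  have hα2 : α ^ 2 = 1 - x := Real.sq_sqrt h1x.le
  -- first term: σ₁²/σ₂² = α²
  have hratio : x / (δ / α) ^ 2 = 1 - x := by
    rw [div_pow, div_div_eq_mul_div, hα2]
    field_simp [hx]
    exact hx
  -- mean term
  have hmean : ‖α • μ - (1 / α) • μ‖ ^ 2 / (2 * (δ / α) ^ 2) = ‖μ‖ ^ 2 / 2 * x := by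
    rw [← sub_smul, norm_smul, mul_pow, Real.norm_eq_abs, sq_abs]
    have h : (α - 1 / α) ^ 2 = x ^ 2 / α ^ 2 := by
      have : α - 1 / α = -x / α := by
        field_simp
        nlinarith [hα2]
      rw [this]; ring_nf
    rw [h, div_pow]
    have hδ2 : δ ^ 2 = x := rfl
    field_simp
    ring
  -- log term
  have hlog : Real.log ((δ / α) / δ) = -Real.log α := by
    have h : δ / α / δ = α⁻¹ := by field_simp
    rw [h, Real.log_inv]
  have hlogα : Real.log α = Real.log (1 - x) / 2 := by
    rw [hα, Real.log_sqrt h1x.le]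
  -- key inequality: -log(1-x) ≤ (4/3) x
  have hkey : -Real.log (1 - x) ≤ 4 / 3 * x := by
    have h1 : Real.log (1 - x) ≥ -(x / (1 - x)) := by
      have := Real.add_one_le_exp (-(x / (1 - x)))
      have h2 : 1 - x/(1-x) ≤ Real.exp (-(x/(1-x))) := by linarith
      have h3 : (1 - x) * (1 - x/(1-x)) ≥ (1-x) * (1 - 2*x) := by
        have : 1 - x/(1-x) ≥ 1 - 2*x := by
          rw [ge_iff_le, sub_le_sub_iff_left, div_le_iff₀ h1x]
          nlinarith
        nlinarith
      -- log(1-x) ≥ -(x/(1-x)) iff 1-x ≥ exp(-(x/(1-x)))... use log monotone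
      have := Real.exp_le_exp.mpr (le_refl (-(x/(1-x))))
      have hexp : Real.exp (-(x/(1-x))) ≤ 1 - x := by
        rw [Real.exp_neg]
        rw [inv_le_comm₀ (Real.exp_pos _) h1x]
        calc (1 - x)⁻¹ = 1 + x/(1-x) := by field_simp; ring
          _ ≤ Real.exp (x/(1-x)) := by
              have := Real.add_one_le_exp (x/(1-x)); linarith
      calc Real.log (1-x) ≥ Real.log (Real.exp (-(x/(1-x)))) :=
            Real.log_le_log (Real.exp_pos _) hexp
        _ = -(x/(1-x)) := Real.log_exp _
    have h2 : x / (1 - x) ≤ 4/3 * x := by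
      rw [div_le_iff₀ h1x]
      nlinarith
    linarith
  rw [hratio, hmean, hlog, hlogα]
  have hd : (0:ℝ) ≤ d := Nat.cast_nonneg d
  have : (d:ℝ) * -(Real.log (1 - x) / 2) ≤ (d:ℝ) * (4/3 * x / 2) := by
    apply mul_le_mul_of_nonneg_left _ hd
    linarith
  nlinarith [this]
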